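/- Suppose (θ_n)_{n≥1} is a BMM sequence with surrogates (g_n^i) and optimality gaps (Δ_n) for f started at θ_0, and suppose g_n^i(θ) − f_n^i(θ) ≥ ‖θ − θ_{n−1}^i‖² for all n ≥ 1, i = 1,…,m and θ ∈ E_i. Then for every N ≥ 0: Σ_{n=0}^N Σ_{i=1}^m |⟨∇f_{n+1}^i(θ_{n+1}^i), θ_n^i − θ_{n+1}^i⟩| ≤ ((L_f + 2)/2)·(f(θ_0) − f*) + (L_f/2 + 2)·m·Σ_{n=1}^{N+1} Δ_n, where ∇f_{n+1}^i denotes the gradient of the marginal map f_{n+1}^i on E_i. In particular, if Σ_{n≥1} Δ_n < ∞ then the series Σ_{n=0}^∞ Σ_{i=1}^m |⟨∇f_{n+1}^i(θ_{n+1}^i), θ_n^i − θ_{n+1}^i⟩| converges. -/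

import Mathlib

open Filter RealInnerProductSpace

open intervalIntegral in
lemma descent_lemma {F : Type*} [NormedAddCommGroup F] [InnerProductSpace ℝ F]
    [CompleteSpace F] (φ : F → ℝ) (hφ : Differentiable ℝ φ) (L : ℝ) (hL : 0 ≤ L)
    (hlip : ∀ a b : F, ‖gradient φ a - gradient φ b‖ ≤ L * ‖a - b‖) (x y : F) :
    |φ y - φ x - ⟪gradient φ x, y - x⟫| ≤ L / 2 * ‖y - x‖ ^ 2 := by
  set d := y - x with hd
  have hGcont : Continuous fun a : F => gradient φ a := by
    refine (LipschitzWith.of_dist_le_mul (K := L.toNNReal) ?_).continuous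
    intro a b
    simpa [dist_eq_norm, Real.coe_toNNReal L hL] using hlip a b
  have hline : ∀ t : ℝ, HasDerivAt (fun s : ℝ => x + s • d) d t := by
    intro t
    simpa using ((hasDerivAt_id t).smul_const d).const_add x
  have hψ : ∀ t : ℝ, HasDerivAt (fun s : ℝ => φ (x + s • d))
      ⟪gradient φ (x + t • d), d⟫ t := by
    intro t
    have h2 : HasFDerivAt φ
        ((InnerProductSpace.toDual ℝ F (gradient φ (x + t • d))) : F →L[ℝ] ℝ)
        (x + t • d) :=
      hasGradientAt_iff_hasFDerivAt.1 (hφ _).hasGradientAt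
    have := h2.comp_hasDerivAt t (hline t)
    simpa [Function.comp, Function.comp_def, InnerProductSpace.toDual_apply_apply] using this
  have hcont : Continuous fun t : ℝ => ⟪gradient φ (x + t • d), d⟫ := by
    exact (hGcont.comp (by continuity)).inner continuous_const
  have h1 : ∫ t in (0:ℝ)..1, ⟪gradient φ (x + t • d), d⟫ = φ y - φ x := by
    have := intervalIntegral.integral_eq_sub_of_hasDerivAt
      (f := fun s : ℝ => φ (x + s • d)) (f' := fun t => ⟪gradient φ (x + t • d), d⟫)
      (fun t _ => hψ t) (hcont.intervalIntegrable 0 1)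
    simpa [hd] using this
  have heq : φ y - φ x - ⟪gradient φ x, d⟫
      = ∫ t in (0:ℝ)..1, ⟪gradient φ (x + t • d) - gradient φ x, d⟫ := by
    simp only [inner_sub_left]
    rw [intervalIntegral.integral_sub (hcont.intervalIntegrable 0 1)
      (intervalIntegrable_const), h1, intervalIntegral.integral_const]
    simp
  rw [heq]
  have hcont2 : Continuous fun t : ℝ => ⟪gradient φ (x + t • d) - gradient φ x, d⟫ := by
    exact ((hGcont.comp (by continuity)).sub continuous_const).inner continuous_const
  calc |∫ t in (0:ℝ)..1, ⟪gradient φ (x + t • d) - gradient φ x, d⟫|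
      ≤ ∫ t in (0:ℝ)..1, |⟪gradient φ (x + t • d) - gradient φ x, d⟫| :=
        intervalIntegral.abs_integral_le_integral_abs (by norm_num)
    _ ≤ ∫ t in (0:ℝ)..1, (L * ‖d‖ ^ 2) * t := by
        refine intervalIntegral.integral_mono_on (by norm_num)
          (hcont2.abs.intervalIntegrable 0 1)
          ((continuous_const.mul continuous_id).intervalIntegrable 0 1) ?_
        intro t ht
        have h3 : |⟪gradient φ (x + t • d) - gradient φ x, d⟫|
            ≤ ‖gradient φ (x + t • d) - gradient φ x‖ * ‖d‖ := abs_real_inner_le_norm _ _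
        have h4 : ‖gradient φ (x + t • d) - gradient φ x‖ ≤ L * (t * ‖d‖) := by
          have := hlip (x + t • d) x
          simpa [norm_smul, abs_of_nonneg ht.1] using this
        nlinarith [norm_nonneg d, norm_nonneg (gradient φ (x + t • d) - gradient φ x), ht.1]
    _ = L / 2 * ‖d‖ ^ 2 := by
        rw [intervalIntegral.integral_const_mul, integral_id]; ring

/-- The point of the product space whose first `i-1` blocks are those of `θ n`, whose
`i`-th block is `v`, and whose remaining blocks are those of `θ (n-1)`.  Thus the `i`-th
marginal objective at cycle `n` is `fun v => f (mixPt θ n i v)`. -/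
def mixPt {m : ℕ} {X : Fin m → Type*} (θ : ℕ → ∀ i, X i) (n : ℕ) (i : Fin m)
    (v : X i) : ∀ j, X j :=
  Function.update (fun j => if (j : ℕ) < (i : ℕ) then θ n j else θ (n - 1) j) i v

/-- The gradient `∇ f_n^i (v)` of the `i`-th marginal objective at cycle `n`,
evaluated at `v : E i`. -/
noncomputable def gradMarg {m : ℕ} {E : Fin m → Type*} [∀ i, NormedAddCommGroup (E i)]
    [∀ i, InnerProductSpace ℝ (E i)] [∀ i, CompleteSpace (E i)]
    (f : (∀ i, E i) → ℝ) (θ : ℕ → ∀ i, E i) (n : ℕ) (i : Fin m) (v : E i) : E i :=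
  gradient (fun u => f (mixPt θ n i u)) v

/-- The `i`-th block partial gradient `∇_i f(x)`: the gradient at `x i` of the map
`u ↦ f (x with i-th block replaced by u)`. -/
noncomputable def gradi {m : ℕ} {E : Fin m → Type*} [∀ i, NormedAddCommGroup (E i)]
    [∀ i, InnerProductSpace ℝ (E i)] [∀ i, CompleteSpace (E i)]
    (f : (∀ i, E i) → ℝ) (x : ∀ i, E i) (i : Fin m) : E i :=
  gradient (fun u => f (Function.update x i u)) (x i)

/-- finite first-order variation.  For a BMM sequence whose majorization
gaps satisfy `g_n^i(θ) - f_n^i(θ) ≥ ‖θ - θ_{n-1}^i‖²`, for every `N ≥ 0`: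
`∑_{n=0}^N ∑_i |⟪∇f_{n+1}^i(θ_{n+1}^i), θ_n^i - θ_{n+1}^i⟫|
  ≤ ((L_f + 2)/2)(f(θ_0) - f*) + (L_f/2 + 2) m ∑_{n=1}^{N+1} Δ_n`; in particular if
`∑_n Δ_n < ∞` then the full series converges. -/
theorem bmm_finite_first_order_variation {m : ℕ} (hm : 1 ≤ m)
    {E : Fin m → Type*} [∀ i, NormedAddCommGroup (E i)]
    [∀ i, InnerProductSpace ℝ (E i)] [∀ i, FiniteDimensional ℝ (E i)]
    (Θ : ∀ i, Set (E i)) (hne : ∀ i, (Θ i).Nonempty)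
    (hclosed : ∀ i, IsClosed (Θ i)) (hconv : ∀ i, Convex ℝ (Θ i))
    (f : (∀ i, E i) → ℝ) (Lf : ℝ) (hLf : 0 < Lf)
    (hdiff : Differentiable ℝ f)
    (hsmooth : ∀ x y : ∀ i, E i,
      Real.sqrt (∑ i, ‖gradi f x i - gradi f y i‖ ^ 2)
        ≤ Lf * Real.sqrt (∑ i, ‖x i - y i‖ ^ 2))
    (fstar : ℝ) (hbdd : ∀ x, fstar ≤ f x)
    (θ : ℕ → ∀ i, E i) (hθ : ∀ n i, θ n i ∈ Θ i)
    (g : ℕ → ∀ i : Fin m, E i → ℝ) (Δ : ℕ → ℝ) (hΔ : ∀ n, 1 ≤ n → 0 ≤ Δ n)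
    (hmaj : ∀ n, 1 ≤ n → ∀ i, ∀ v : E i, f (mixPt θ n i v) ≤ g n i v)
    (hsharp : ∀ n, 1 ≤ n → ∀ i, g n i (θ (n - 1) i) = f (mixPt θ n i (θ (n - 1) i)))
    (hopt : ∀ n, 1 ≤ n → ∀ i, ∀ v ∈ Θ i, g n i (θ n i) ≤ g n i v + Δ n)
    (hgap : ∀ n, 1 ≤ n → ∀ i, ∀ v : E i,
      ‖v - θ (n - 1) i‖ ^ 2 ≤ g n i v - f (mixPt θ n i v)) :
    (∀ N : ℕ,
      ∑ n ∈ Finset.range (N + 1), ∑ i,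
          |⟪gradMarg f θ (n + 1) i (θ (n + 1) i), θ n i - θ (n + 1) i⟫|
        ≤ (Lf + 2) / 2 * (f (θ 0) - fstar)
          + (Lf / 2 + 2) * (m : ℝ) * ∑ n ∈ Finset.Icc 1 (N + 1), Δ n)
    ∧ ((Summable fun n => Δ (n + 1)) →
        Summable fun n => ∑ i,
          |⟪gradMarg f θ (n + 1) i (θ (n + 1) i), θ n i - θ (n + 1) i⟫|) := by
  classical
  -- the interpolating points
  set P : ℕ → ℕ → ∀ j, E j :=
    fun n k j => if (j : ℕ) < k then θ n j else θ (n - 1) j with hP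
  have hmixA : ∀ (n : ℕ) (i : Fin m), mixPt θ n i (θ (n - 1) i) = P n i := by
    intro n i; funext j
    by_cases h : j = i
    · subst h; simp [mixPt, hP]
    · have h' : (j : ℕ) ≠ (i : ℕ) := fun hc => h (Fin.ext hc)
      simp [mixPt, Function.update_of_ne h, hP]
  have hmixB : ∀ (n : ℕ) (i : Fin m), mixPt θ n i (θ n i) = P n ((i : ℕ) + 1) := by
    intro n i; funext j
    by_cases h : j = i
    · subst h; simp [mixPt, hP]
    · have h' : (j : ℕ) ≠ (i : ℕ) := fun hc => h (Fin.ext hc)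
      simp only [mixPt, Function.update_of_ne h, hP]
      exact if_congr (by omega) rfl rfl
  have hP0 : ∀ n : ℕ, P n 0 = θ (n - 1) := by
    intro n; funext j; simp [hP]
  have hPm : ∀ n : ℕ, P n m = θ n := by
    intro n; funext j; simp [hP, j.isLt]
  -- basic per-step inequalities
  have key1 : ∀ n, 1 ≤ n → ∀ i : Fin m,
      f (P n ((i : ℕ) + 1)) ≤ f (P n i) + Δ n := by
    intro n hn i
    calc f (P n ((i : ℕ) + 1)) = f (mixPt θ n i (θ n i)) := by rw [hmixB]
      _ ≤ g n i (θ n i) := hmaj n hn i _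
      _ ≤ g n i (θ (n - 1) i) + Δ n := hopt n hn i _ (hθ _ i)
      _ = f (mixPt θ n i (θ (n - 1) i)) + Δ n := by rw [hsharp n hn i]
      _ = f (P n i) + Δ n := by rw [hmixA]
  have key2 : ∀ n, 1 ≤ n → ∀ i : Fin m,
      ‖θ n i - θ (n - 1) i‖ ^ 2 ≤ f (P n i) - f (P n ((i : ℕ) + 1)) + Δ n := by
    intro n hn i
    have h1 := hgap n hn i (θ n i)
    have h2 := hopt n hn i (θ (n - 1) i) (hθ _ i)
    have h3 := hsharp n hn i
    rw [hmixB] at h1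
    rw [hmixA] at h3
    linarith
  -- the marginal map and its gradient
  have hupdate : ∀ (n : ℕ) (i : Fin m) (v u : E i),
      Function.update (mixPt θ n i v) i u = mixPt θ n i u := by
    intro n i v u
    simp [mixPt, Function.update_idem]
  have hgradeq : ∀ (n : ℕ) (i : Fin m) (v : E i),
      gradMarg f θ n i v = gradi f (mixPt θ n i v) i := by
    intro n i v
    unfold gradMarg gradi
    have h1 : (mixPt θ n i v) i = v := Function.update_self _ _ _
    rw [h1]
    congr 1
    funext u
    rw [hupdate n i v u]
  have hdiffmarg : ∀ (n : ℕ) (i : Fin m),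
      Differentiable ℝ (fun v : E i => f (mixPt θ n i v)) := by
    intro n i
    have heq : (fun v : E i => f (mixPt θ n i v)) = f ∘
        (Function.update (fun j : Fin m =>
          if (j : ℕ) < (i : ℕ) then θ n j else θ (n - 1) j) i) := rfl
    rw [heq]
    intro v
    exact (hdiff _).comp v (hasFDerivAt_update _ v).differentiableAt
  -- Lipschitz property of the marginal gradient
  have hlipmarg : ∀ (n : ℕ) (i : Fin m) (a b : E i),
      ‖gradMarg f θ n i a - gradMarg f θ n i b‖ ≤ Lf * ‖a - b‖ := by
    intro n i a b
    rw [hgradeq, hgradeq]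
    set x := mixPt θ n i a
    set y := mixPt θ n i b
    have h1 : ‖gradi f x i - gradi f y i‖
        ≤ Real.sqrt (∑ j, ‖gradi f x j - gradi f y j‖ ^ 2) := by
      rw [show ‖gradi f x i - gradi f y i‖
          = Real.sqrt (‖gradi f x i - gradi f y i‖ ^ 2) from
        (Real.sqrt_sq (norm_nonneg _)).symm]
      refine Real.sqrt_le_sqrt ?_
      exact Finset.single_le_sum
        (f := fun j => ‖gradi f x j - gradi f y j‖ ^ 2)
        (fun j _ => by positivity) (Finset.mem_univ i)
    have h2 : (∑ j, ‖x j - y j‖ ^ 2) = ‖a - b‖ ^ 2 := by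
      rw [Finset.sum_eq_single i]
      · have : x i = a := Function.update_self _ _ _
        have hy : y i = b := Function.update_self _ _ _
        rw [this, hy]
      · intro j _ hj
        have : x j = y j := by
          simp [x, y, mixPt, Function.update_of_ne hj]
        simp [this]
      · intro h; exact absurd (Finset.mem_univ i) h
    calc ‖gradi f x i - gradi f y i‖
        ≤ Real.sqrt (∑ j, ‖gradi f x j - gradi f y j‖ ^ 2) := h1
      _ ≤ Lf * Real.sqrt (∑ j, ‖x j - y j‖ ^ 2) := hsmooth x y
      _ = Lf * ‖a - b‖ := by rw [h2, Real.sqrt_sq (norm_nonneg _)]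
  -- per-(n,i) estimate
  have main_i : ∀ (n : ℕ) (i : Fin m),
      |⟪gradMarg f θ (n + 1) i (θ (n + 1) i), θ n i - θ (n + 1) i⟫|
        ≤ (1 + Lf / 2) * (f (P (n + 1) i) - f (P (n + 1) ((i : ℕ) + 1)))
          + (Lf / 2 + 2) * Δ (n + 1) := by
    intro n i
    have hA : mixPt θ (n + 1) i (θ n i) = P (n + 1) (i : ℕ) := by
      have := hmixA (n + 1) i
      simpa using this
    have hB : mixPt θ (n + 1) i (θ (n + 1) i) = P (n + 1) ((i : ℕ) + 1) :=
      hmixB (n + 1) i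
    have hdesc := descent_lemma (fun v : E i => f (mixPt θ (n + 1) i v))
      (hdiffmarg (n + 1) i) Lf hLf.le (hlipmarg (n + 1) i) (θ (n + 1) i) (θ n i)
    have hgr : gradient (fun v : E i => f (mixPt θ (n + 1) i v)) (θ (n + 1) i)
        = gradMarg f θ (n + 1) i (θ (n + 1) i) := rfl
    simp only [hA, hB, hgr] at hdesc
    set D : ℝ := f (P (n + 1) (i : ℕ)) - f (P (n + 1) ((i : ℕ) + 1)) with hD
    have hone : 1 ≤ n + 1 := Nat.le_add_left 1 n
    have hk1 := key1 (n + 1) hone i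
    have hk2 := key2 (n + 1) hone i
    simp only [Nat.add_sub_cancel] at hk2
    have hΔn : 0 ≤ Δ (n + 1) := hΔ (n + 1) hone
    have hs : ‖θ n i - θ (n + 1) i‖ ^ 2 ≤ D + Δ (n + 1) := by
      rw [norm_sub_rev]; exact hk2
    have habs : |D - ⟪gradMarg f θ (n + 1) i (θ (n + 1) i), θ n i - θ (n + 1) i⟫|
        ≤ Lf / 2 * ‖θ n i - θ (n + 1) i‖ ^ 2 := by
      have : D - ⟪gradMarg f θ (n + 1) i (θ (n + 1) i), θ n i - θ (n + 1) i⟫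
          = -(f (P (n + 1) ((i : ℕ) + 1)) - f (P (n + 1) (i : ℕ))
            + ⟪gradMarg f θ (n + 1) i (θ (n + 1) i), θ n i - θ (n + 1) i⟫) + 0 := by
        rw [hD]; ring
      rw [this, add_zero, abs_neg]
      calc |f (P (n + 1) ((i : ℕ) + 1)) - f (P (n + 1) (i : ℕ))
            + ⟪gradMarg f θ (n + 1) i (θ (n + 1) i), θ n i - θ (n + 1) i⟫|
          = |f (P (n + 1) (i : ℕ)) - f (P (n + 1) ((i : ℕ) + 1))
            - ⟪gradMarg f θ (n + 1) i (θ (n + 1) i), θ n i - θ (n + 1) i⟫| := by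
            rw [← abs_neg]; ring_nf
        _ ≤ Lf / 2 * ‖θ n i - θ (n + 1) i‖ ^ 2 := hdesc
    have hDlb : -D ≤ Δ (n + 1) := by rw [hD]; linarith
    have h5 : Lf / 2 * ‖θ n i - θ (n + 1) i‖ ^ 2 ≤ Lf / 2 * (D + Δ (n + 1)) := by
      have hc : (0:ℝ) ≤ Lf / 2 := by linarith
      exact mul_le_mul_of_nonneg_left hs hc
    have h6 : |D| ≤ D + 2 * Δ (n + 1) := by
      rcases abs_cases D with ⟨h, _⟩ | ⟨h, _⟩ <;> linarith
    have htri : |⟪gradMarg f θ (n + 1) i (θ (n + 1) i), θ n i - θ (n + 1) i⟫|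
        ≤ |D - ⟪gradMarg f θ (n + 1) i (θ (n + 1) i), θ n i - θ (n + 1) i⟫| + |D| := by
      rcases abs_cases (⟪gradMarg f θ (n + 1) i (θ (n + 1) i), θ n i - θ (n + 1) i⟫) with
        ⟨h1, _⟩ | ⟨h1, _⟩ <;>
      rcases abs_cases (D - ⟪gradMarg f θ (n + 1) i (θ (n + 1) i),
        θ n i - θ (n + 1) i⟫) with ⟨h2, _⟩ | ⟨h2, _⟩ <;>
      rcases abs_cases D with ⟨h3, _⟩ | ⟨h3, _⟩ <;> linarith
    have : |⟪gradMarg f θ (n + 1) i (θ (n + 1) i), θ n i - θ (n + 1) i⟫|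
        ≤ (1 + Lf / 2) * D + (Lf / 2 + 2) * Δ (n + 1) := by
      linarith [habs, h5, h6, htri]
    rw [hD] at this
    linarith [this]
  -- per-n estimate
  have main_n : ∀ n : ℕ,
      (∑ i, |⟪gradMarg f θ (n + 1) i (θ (n + 1) i), θ n i - θ (n + 1) i⟫|)
        ≤ (1 + Lf / 2) * (f (θ n) - f (θ (n + 1))) + (Lf / 2 + 2) * m * Δ (n + 1) := by
    intro n
    have htel : (∑ i : Fin m, (f (P (n + 1) (i : ℕ)) - f (P (n + 1) ((i : ℕ) + 1))))
        = f (θ n) - f (θ (n + 1)) := by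
      rw [Fin.sum_univ_eq_sum_range (fun k => f (P (n + 1) k) - f (P (n + 1) (k + 1))) m]
      rw [Finset.sum_range_sub' (fun k => f (P (n + 1) k)) m]
      rw [hP0, hPm]
      norm_num
    calc (∑ i, |⟪gradMarg f θ (n + 1) i (θ (n + 1) i), θ n i - θ (n + 1) i⟫|)
        ≤ ∑ i : Fin m, ((1 + Lf / 2) * (f (P (n + 1) i) - f (P (n + 1) ((i : ℕ) + 1)))
            + (Lf / 2 + 2) * Δ (n + 1)) :=
          Finset.sum_le_sum fun i _ => main_i n i
      _ = (1 + Lf / 2) * (f (θ n) - f (θ (n + 1))) + (Lf / 2 + 2) * m * Δ (n + 1) := by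
          rw [Finset.sum_add_distrib, ← Finset.mul_sum, htel]
          simp [Finset.sum_const, Finset.card_univ]
          ring
  -- conversion of the Δ-sum index
  have hIcc : ∀ N : ℕ, (∑ n ∈ Finset.Icc 1 (N + 1), Δ n)
      = ∑ n ∈ Finset.range (N + 1), Δ (n + 1) := by
    intro N
    induction N with
    | zero => simp
    | succ K ih =>
        rw [Finset.sum_Icc_succ_top (by omega), ih]
        exact (Finset.sum_range_succ _ (K + 1)).symm
  -- the main bound
  have part1 : ∀ N : ℕ,
      ∑ n ∈ Finset.range (N + 1), ∑ i,
          |⟪gradMarg f θ (n + 1) i (θ (n + 1) i), θ n i - θ (n + 1) i⟫|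
        ≤ (Lf + 2) / 2 * (f (θ 0) - fstar)
          + (Lf / 2 + 2) * (m : ℝ) * ∑ n ∈ Finset.Icc 1 (N + 1), Δ n := by
    intro N
    have hsum : ∑ n ∈ Finset.range (N + 1), ∑ i,
        |⟪gradMarg f θ (n + 1) i (θ (n + 1) i), θ n i - θ (n + 1) i⟫|
        ≤ ∑ n ∈ Finset.range (N + 1),
          ((1 + Lf / 2) * (f (θ n) - f (θ (n + 1))) + (Lf / 2 + 2) * m * Δ (n + 1)) :=
      Finset.sum_le_sum fun n _ => main_n n
    have htel2 : (∑ n ∈ Finset.range (N + 1), (f (θ n) - f (θ (n + 1))))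
        = f (θ 0) - f (θ (N + 1)) :=
      Finset.sum_range_sub' (fun n => f (θ n)) (N + 1)
    have hexp : ∑ n ∈ Finset.range (N + 1),
        ((1 + Lf / 2) * (f (θ n) - f (θ (n + 1))) + (Lf / 2 + 2) * m * Δ (n + 1))
        = (1 + Lf / 2) * (f (θ 0) - f (θ (N + 1)))
          + (Lf / 2 + 2) * m * ∑ n ∈ Finset.range (N + 1), Δ (n + 1) := by
      rw [Finset.sum_add_distrib, ← Finset.mul_sum, htel2, ← Finset.mul_sum]
    have hlow : fstar ≤ f (θ (N + 1)) := hbdd _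
    have hco : (0:ℝ) ≤ 1 + Lf / 2 := by linarith
    have : (1 + Lf / 2) * (f (θ 0) - f (θ (N + 1)))
        ≤ (1 + Lf / 2) * (f (θ 0) - fstar) :=
      mul_le_mul_of_nonneg_left (by linarith) hco
    rw [hIcc N]
    calc ∑ n ∈ Finset.range (N + 1), ∑ i,
          |⟪gradMarg f θ (n + 1) i (θ (n + 1) i), θ n i - θ (n + 1) i⟫|
        ≤ (1 + Lf / 2) * (f (θ 0) - f (θ (N + 1)))
          + (Lf / 2 + 2) * m * ∑ n ∈ Finset.range (N + 1), Δ (n + 1) := by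
          rw [← hexp]; exact hsum
      _ ≤ (Lf + 2) / 2 * (f (θ 0) - fstar)
          + (Lf / 2 + 2) * (m : ℝ) * ∑ n ∈ Finset.range (N + 1), Δ (n + 1) := by
          have h7 : (Lf + 2) / 2 = 1 + Lf / 2 := by ring
          rw [h7]; linarith
  refine ⟨part1, ?_⟩
  -- summability
  intro hsummΔ
  set a : ℕ → ℝ := fun n => ∑ i,
    |⟪gradMarg f θ (n + 1) i (θ (n + 1) i), θ n i - θ (n + 1) i⟫| with ha
  have hanneg : ∀ n, 0 ≤ a n := fun n =>
    Finset.sum_nonneg fun i _ => abs_nonneg _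
  have hΔnneg : ∀ n : ℕ, 0 ≤ Δ (n + 1) := fun n => hΔ (n + 1) (Nat.le_add_left 1 n)
  set C : ℝ := (Lf + 2) / 2 * (f (θ 0) - fstar)
      + (Lf / 2 + 2) * (m : ℝ) * ∑' n, Δ (n + 1) with hC
  have hCnneg : 0 ≤ C := by
    have h1 : 0 ≤ f (θ 0) - fstar := by linarith [hbdd (θ 0)]
    have h2 : (0:ℝ) ≤ ∑' n, Δ (n + 1) := tsum_nonneg hΔnneg
    have h3 : (0:ℝ) ≤ (Lf + 2) / 2 := by linarith
    have h4 : (0:ℝ) ≤ (Lf / 2 + 2) * (m : ℝ) := by positivity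
    rw [hC]
    have h5 := mul_nonneg h3 h1
    have h6 := mul_nonneg h4 h2
    linarith
  refine summable_of_sum_range_le (c := C) hanneg fun N => ?_
  rcases Nat.eq_zero_or_pos N with hN | hN
  · subst hN; simpa using hCnneg
  · obtain ⟨K, rfl⟩ := Nat.exists_eq_add_of_le hN
    have h8 := part1 K
    have h9 : (∑ n ∈ Finset.Icc 1 (K + 1), Δ n) ≤ ∑' n, Δ (n + 1) := by
      rw [hIcc K]
      exact Summable.sum_le_tsum _ (fun n _ => hΔnneg n) hsummΔ
    have h10 : (0:ℝ) ≤ (Lf / 2 + 2) * (m : ℝ) := by positivity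
    have h11 : (Lf / 2 + 2) * (m : ℝ) * (∑ n ∈ Finset.Icc 1 (K + 1), Δ n)
        ≤ (Lf / 2 + 2) * (m : ℝ) * ∑' n, Δ (n + 1) :=
      mul_le_mul_of_nonneg_left h9 h10
    have : (1 + K) = K + 1 := by omega
    rw [this]
    calc ∑ n ∈ Finset.range (K + 1), a n
        ≤ (Lf + 2) / 2 * (f (θ 0) - fstar)
          + (Lf / 2 + 2) * (m : ℝ) * ∑ n ∈ Finset.Icc 1 (K + 1), Δ n := h8
      _ ≤ C := by rw [hC]; linarith
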